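/- arXiv:0810.3969 — 5 statements merged into one kernel-verified Lean document; each statement's English description precedes it below -/
import Mathlib

section
/- Let R be a commutative noetherian ring and M an R-module. Then M is a finitely generated R-module if and only if the following two conditions hold: (1) the localization M_m is a finitely generated R_m-module for every maximal ideal m of R, and (2) for every finitely generated submodule N of M, the set of minimal primes of the support of M/N is finite. -/
universe u

/-- `Min_R(X)`: the set of minimal primes of the support of the module `X`. -/
def minSupport (R : Type u) [CommRing R] (X : Type u) [AddCommGroup X] [Module R X] :
    Set (PrimeSpectrum R) :=
  {p | p ∈ Module.support R X ∧ ∀ q ∈ Module.support R X, q ≤ p → q = p}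

section Aux

variable {R : Type u} [CommRing R]

/-- The support of a module is stable under specialization. -/
lemma aux_support_stable {X : Type u} [AddCommGroup X] [Module R X]
    {p q : PrimeSpectrum R} (hp : p ∈ Module.support R X) (hpq : p ≤ q) :
    q ∈ Module.support R X := by
  obtain ⟨x, hx⟩ := Module.mem_support_iff_exists_annihilator.mp hp
  exact Module.mem_support_iff_exists_annihilator.mpr ⟨x, hx.trans hpq⟩

variable {M : Type u} [AddCommGroup M] [Module R M]

lemma aux_support_quotient_mono {N N' : Submodule R M} (h : N ≤ N') :
    Module.support R (M ⧸ N') ⊆ Module.support R (M ⧸ N) := by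
  apply Module.support_subset_of_surjective (Submodule.mapQ N N' LinearMap.id (by simpa using h))
  intro y
  obtain ⟨x, rfl⟩ := Submodule.Quotient.mk_surjective _ y
  exact ⟨Submodule.Quotient.mk x, by simp [Submodule.mapQ_apply]⟩

lemma aux_finite_localized_quotient (m : Ideal R) [m.IsPrime]
    [Module.Finite (Localization.AtPrime m) (LocalizedModule m.primeCompl M)]
    (N : Submodule R M) :
    Module.Finite (Localization.AtPrime m) (LocalizedModule m.primeCompl (M ⧸ N)) := by
  let φ := IsLocalizedModule.map m.primeCompl (LocalizedModule.mkLinearMap m.primeCompl M)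
    (LocalizedModule.mkLinearMap m.primeCompl (M ⧸ N)) N.mkQ
  have hsurj : Function.Surjective φ :=
    IsLocalizedModule.map_surjective _ _ _ _ (Submodule.Quotient.mk_surjective N)
  exact Module.Finite.of_surjective
    (φ.extendScalarsOfIsLocalization m.primeCompl (Localization.AtPrime m)) hsurj

/-- If the localization of `X` at a maximal ideal `m` is finite, then every prime `q ≤ m`
in the support of `X` contains a minimal element of the support. -/
lemma aux_exists_minSupport_le {X : Type u} [AddCommGroup X] [Module R X]
    (m : Ideal R) (hm : m.IsMaximal)
    [Module.Finite (Localization.AtPrime m) (LocalizedModule m.primeCompl X)]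
    (q : PrimeSpectrum R) (hq : q ∈ Module.support R X) (hqm : q.asIdeal ≤ m) :
    ∃ p ∈ minSupport R X, p ≤ q := by
  classical
  set A : Ideal (Localization.AtPrime m) :=
    Module.annihilator (Localization.AtPrime m) (LocalizedModule m.primeCompl X) with hA
  set I : Ideal R := A.comap (algebraMap R (Localization.AtPrime m)) with hI
  have key : ∀ p : PrimeSpectrum R, p.asIdeal ≤ m →
      (p ∈ Module.support R X ↔ I ≤ p.asIdeal) := by
    intro p hpm
    constructor
    · intro hp a ha
      obtain ⟨x, hx⟩ := Module.mem_support_iff_exists_annihilator.mp hp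
      have h0 : a • (LocalizedModule.mk x (1 : m.primeCompl)) = 0 := by
        have := Module.mem_annihilator.mp ha (LocalizedModule.mk x (1 : m.primeCompl))
        simpa [algebraMap_smul] using this
      rw [LocalizedModule.smul'_mk, show (0 : LocalizedModule m.primeCompl X) =
        LocalizedModule.mk 0 (1 : m.primeCompl) from (LocalizedModule.zero_mk _).symm] at h0
      obtain ⟨u, hu⟩ := LocalizedModule.mk_eq.mp h0
      have hu' : ((u : R) * a) • x = 0 := by
        simpa [Submonoid.smul_def, smul_smul, mul_assoc] using hu
      have hmem : ((u : R) * a) ∈ p.asIdeal :=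
        hx ((Submodule.mem_annihilator_span_singleton _ _).mpr hu')
      rcases p.2.mem_or_mem hmem with h | h
      · exact absurd (hpm h) u.2
      · exact h
    · intro hIp
      by_contra hp
      rw [Module.notMem_support_iff'] at hp
      choose r hr hr0 using hp
      obtain ⟨T, hT⟩ := Module.finite_def.mp
        (inferInstance : Module.Finite (Localization.AtPrime m)
          (LocalizedModule m.primeCompl X))
      have hrep : ∀ v : LocalizedModule m.primeCompl X,
          ∃ x s, v = LocalizedModule.mk x s := fun v =>
        LocalizedModule.induction_on (fun x s => ⟨x, s, rfl⟩) v
      choose xv sv hxv using hrep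
      have haP : (∏ v ∈ T, r (xv v)) ∈ p.asIdeal.primeCompl :=
        Submonoid.prod_mem _ (fun v _ => hr (xv v))
      have hann : (∏ v ∈ T, r (xv v)) ∈ I := by
        rw [hI, Ideal.mem_comap]
        rw [hA]
        apply Module.mem_annihilator.mpr
        intro w
        rw [algebraMap_smul]
        have hw : w ∈ Submodule.span (Localization.AtPrime m) (T : Set _) := by
          rw [hT]; trivial
        induction hw using Submodule.span_induction with
        | mem v hv =>
            obtain ⟨c, hc⟩ := Finset.dvd_prod_of_mem (fun w => r (xv w)) hv
            have h0 : r (xv v) • v = 0 := by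
              nth_rewrite 2 [hxv v]
              rw [LocalizedModule.smul'_mk, hr0 (xv v), LocalizedModule.zero_mk]
            rw [hc, mul_comm, mul_smul, h0, smul_zero]
        | zero => rw [smul_zero]
        | add x y hx hy ihx ihy => rw [smul_add, ihx, ihy, add_zero]
        | smul c x hx ih =>
            rw [smul_comm, ih, smul_zero]
      exact haP (hIp hann)
  have hIq : I ≤ q.asIdeal := (key q hqm).mp hq
  haveI := q.2
  obtain ⟨P, hP, hPq⟩ := Ideal.exists_minimalPrimes_le hIq
  haveI hPprime : P.IsPrime := hP.1.1
  refine ⟨⟨P, hPprime⟩, ⟨?_, ?_⟩, hPq⟩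
  · exact (key ⟨P, hPprime⟩ (hPq.trans hqm)).mpr hP.1.2
  · intro q' hq' hle
    have hle' : q'.asIdeal ≤ P := hle
    have hq'm : q'.asIdeal ≤ m := hle'.trans (hPq.trans hqm)
    have : I ≤ q'.asIdeal := (key q' hq'm).mp hq'
    exact PrimeSpectrum.ext (le_antisymm hle' (hP.2 ⟨q'.2, this⟩ hle'))

/-- Using finiteness of the localization at a maximal ideal `m`, there is a finitely
generated submodule `N` with `m` not in the support of `M ⧸ N`. -/
lemma aux_exists_fg_not_mem_support (m : Ideal R) (hm : m.IsMaximal)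
    [Module.Finite (Localization.AtPrime m) (LocalizedModule m.primeCompl M)] :
    ∃ N : Submodule R M, N.FG ∧
      (⟨m, hm.isPrime⟩ : PrimeSpectrum R) ∉ Module.support R (M ⧸ N) := by
  classical
  obtain ⟨T, hT⟩ := Module.finite_def.mp
    (inferInstance : Module.Finite (Localization.AtPrime m) (LocalizedModule m.primeCompl M))
  have hrep : ∀ v : LocalizedModule m.primeCompl M,
      ∃ x s, v = LocalizedModule.mk x s := fun v =>
    LocalizedModule.induction_on (fun x s => ⟨x, s, rfl⟩) v
  choose xv sv hxv using hrep
  refine ⟨Submodule.span R (xv '' ↑T), Submodule.fg_span (T.finite_toSet.image _), ?_⟩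
  have hloc : (Submodule.span R (xv '' ↑T)).localized' (Localization.AtPrime m) m.primeCompl
      (LocalizedModule.mkLinearMap m.primeCompl M) = ⊤ := by
    rw [Submodule.localized'_span, eq_top_iff, ← hT, Submodule.span_le]
    intro v hv
    rw [show v = LocalizedModule.mk (xv v) (sv v) from hxv v,
      show LocalizedModule.mk (xv v) (sv v)
          = Localization.mk 1 (sv v) • LocalizedModule.mk (xv v) (1 : m.primeCompl) by
        rw [LocalizedModule.mk_smul_mk, one_smul, mul_one]]
    exact Submodule.smul_mem _ _ (Submodule.subset_span
      ⟨xv v, Set.mem_image_of_mem _ hv, rfl⟩)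
  rw [Module.notMem_support_iff']
  intro y
  obtain ⟨x, rfl⟩ := Submodule.Quotient.mk_surjective _ y
  have hx : LocalizedModule.mk x (1 : m.primeCompl) ∈
      (Submodule.span R (xv '' ↑T)).localized' (Localization.AtPrime m) m.primeCompl
      (LocalizedModule.mkLinearMap m.primeCompl M) := by rw [hloc]; trivial
  obtain ⟨n, hn, s, hs⟩ := hx
  rw [← IsLocalizedModule.mk_eq_mk'] at hs
  obtain ⟨u, hu⟩ := LocalizedModule.mk_eq.mp hs
  refine ⟨(u : R) * (s : R), m.primeCompl.mul_mem u.2 s.2, ?_⟩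
  rw [← Submodule.Quotient.mk_smul, Submodule.Quotient.mk_eq_zero]
  have h1 : ((u : R) * (s : R)) • x = (u : R) • n := by
    simpa [Submonoid.smul_def, smul_smul, mul_assoc] using hu.symm
  rw [h1]
  exact Submodule.smul_mem _ _ hn

end Aux

/-- Over a noetherian ring `R`, a module `M` is finitely generated if and only if
`M_m` is a finitely generated `R_m`-module for every maximal ideal `m` and for every
finitely generated submodule `N ⊆ M` the set of minimal primes of the support of
`M/N` is finite. -/
theorem finite_iff_localizations_finite_and_min_finite
    (R : Type u) [CommRing R] [IsNoetherianRing R]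
    (M : Type u) [AddCommGroup M] [Module R M] :
    Module.Finite R M ↔
      ((∀ (m : Ideal R) [m.IsMaximal],
          Module.Finite (Localization.AtPrime m) (LocalizedModule m.primeCompl M)) ∧
        ∀ N : Submodule R M, N.FG → (minSupport R (M ⧸ N)).Finite) := by
  classical
  constructor
  · intro hfin
    constructor
    · intro m hm
      exact Module.Finite.of_isLocalizedModule m.primeCompl
        (LocalizedModule.mkLinearMap m.primeCompl M)
    · intro N hN
      haveI : Module.Finite R (M ⧸ N) :=
        Module.Finite.of_surjective N.mkQ (Submodule.Quotient.mk_surjective N)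
      set I := Module.annihilator R (M ⧸ N) with hIdef
      have hsub : minSupport R (M ⧸ N) ⊆ PrimeSpectrum.asIdeal ⁻¹' I.minimalPrimes := by
        rintro p ⟨hp, hmin⟩
        refine ⟨⟨p.2, Module.mem_support_iff_of_finite.mp hp⟩, ?_⟩
        rintro J ⟨hJp, hJI⟩ hle
        have hJsupp : (⟨J, hJp⟩ : PrimeSpectrum R) ∈ Module.support R (M ⧸ N) :=
          Module.mem_support_iff_of_finite.mpr hJI
        have := hmin _ hJsupp hle
        exact le_of_eq (congrArg PrimeSpectrum.asIdeal this).symm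
      have hfinmin : I.minimalPrimes.Finite := by
        rw [Ideal.minimalPrimes_eq_comap]
        exact (minimalPrimes.finite_of_isNoetherianRing _).image _
      exact (hfinmin.preimage (Set.injOn_of_injective
        (fun a b h => PrimeSpectrum.ext h))).subset hsub
  · rintro ⟨h1, h2⟩
    set F : Submodule R M → Ideal R :=
      fun N => sInf (PrimeSpectrum.asIdeal '' minSupport R (M ⧸ N)) with hF
    have key : ∀ N : Submodule R M, N.FG → ∀ q : PrimeSpectrum R,
        q ∈ Module.support R (M ⧸ N) ↔ F N ≤ q.asIdeal := by
      intro N hN q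
      constructor
      · intro hq
        obtain ⟨mI, hmI, hqm⟩ := q.asIdeal.exists_le_maximal q.2.ne_top
        haveI := hmI
        haveI := h1 mI
        haveI := aux_finite_localized_quotient (M := M) mI N
        obtain ⟨p, hpmin, hpq⟩ := aux_exists_minSupport_le mI hmI q hq hqm
        have hple : F N ≤ p.asIdeal := sInf_le (Set.mem_image_of_mem _ hpmin)
        exact hple.trans (show p.asIdeal ≤ q.asIdeal from hpq)
      · intro hq
        have hfin := h2 N hN
        have hFs : F N = hfin.toFinset.inf PrimeSpectrum.asIdeal := by
          apply le_antisymm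
          · exact Finset.le_inf fun p hp => sInf_le ⟨p, hfin.mem_toFinset.mp hp, rfl⟩
          · apply le_sInf
            rintro _ ⟨p, hp, rfl⟩
            exact Finset.inf_le (hfin.mem_toFinset.mpr hp)
        rw [hFs] at hq
        obtain ⟨p, hp, hple⟩ := (Ideal.IsPrime.inf_le' q.2).mp hq
        have hpmin : p ∈ minSupport R (M ⧸ N) := hfin.mem_toFinset.mp hp
        exact aux_support_stable hpmin.1 hple
    have hmono : ∀ N N' : Submodule R M, N.FG → N' ≤ ⊤ → N ≤ N' → F N ≤ F N' := by
      intro N N' hN _ hle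
      apply le_sInf
      rintro _ ⟨p, hp, rfl⟩
      exact (key N hN p).mp (aux_support_quotient_mono hle hp.1)
    obtain ⟨J₀, ⟨N₀, hN₀, hJ₀⟩, hmaxJ⟩ :=
      (set_has_maximal_iff_noetherian.mpr (inferInstance : IsNoetherian R R))
        {J | ∃ N : Submodule R M, N.FG ∧ F N = J} ⟨F ⊥, ⊥, Submodule.fg_bot, rfl⟩
    have hsupp : Module.support R (M ⧸ N₀) = ∅ := by
      by_contra hne
      obtain ⟨q, hq⟩ := Set.nonempty_iff_ne_empty.mpr hne
      obtain ⟨mI, hmI, hqm⟩ := q.asIdeal.exists_le_maximal q.2.ne_top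
      haveI := hmI
      haveI := h1 mI
      obtain ⟨N₁, hN₁, hm₁⟩ := aux_exists_fg_not_mem_support (M := M) mI hmI
      set N₂ := N₀ ⊔ N₁ with hN₂def
      have hN₂ : N₂.FG := hN₀.sup hN₁
      have h02 : J₀ ≤ F N₂ := hJ₀ ▸ hmono N₀ N₂ hN₀ le_top le_sup_left
      have heq : F N₂ = J₀ :=
        ((lt_or_eq_of_le h02).resolve_left (hmaxJ _ ⟨N₂, hN₂, rfl⟩)).symm
      have hmq : (⟨mI, hmI.isPrime⟩ : PrimeSpectrum R) ∈ Module.support R (M ⧸ N₀) :=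
        aux_support_stable hq hqm
      have hmq₂ : (⟨mI, hmI.isPrime⟩ : PrimeSpectrum R) ∈ Module.support R (M ⧸ N₂) := by
        rw [key N₂ hN₂, heq, ← hJ₀]
        exact (key N₀ hN₀ _).mp hmq
      exact hm₁ (aux_support_quotient_mono le_sup_right hmq₂)
    have htop : N₀ = ⊤ :=
      Submodule.Quotient.subsingleton_iff.mp (Module.support_eq_empty_iff.mp hsupp)
    exact Module.finite_def.mpr (htop ▸ hN₀)
end

section
/- Let R be a commutative noetherian ring and let 0 → M' → M → M'' → 0 be a short exact sequence of R-modules. If M' and M'' both belong to the class Z, then M belongs to the class Z. -/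
universe u

/-- An `R`-module `M` belongs to the class `Z` if for every descending chain
`N 0 ⊇ N 1 ⊇ N 2 ⊇ ...` of submodules of `M` there is an index `n` such that for all
`i ≥ n` every prime in the support of `N i / N (i+1)` is a maximal ideal. -/
def InClassZ (R : Type u) [CommRing R] (M : Type u) [AddCommGroup M] [Module R M] : Prop :=
  ∀ N : ℕ → Submodule R M, (∀ i, N (i + 1) ≤ N i) →
    ∃ n : ℕ, ∀ i ≥ n,
      ∀ p ∈ Module.support R (↥(N i) ⧸ (N (i + 1)).comap (N i).subtype),
        p.asIdeal.IsMaximal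

/-- The class  is closed under extensions: if  is exact and both
 and  are in the class , then so is . -/
theorem inClassZ_of_extension
    (R : Type u) [CommRing R] [IsNoetherianRing R]
    (M' M M'' : Type u) [AddCommGroup M'] [Module R M'] [AddCommGroup M] [Module R M]
    [AddCommGroup M''] [Module R M'']
    (f : M' →ₗ[R] M) (g : M →ₗ[R] M'')
    (hf : Function.Injective f) (hg : Function.Surjective g)
    (hfg : LinearMap.range f = LinearMap.ker g)
    (h' : InClassZ R M') (h'' : InClassZ R M'') :
    InClassZ R M := by
  intro N hN
  set A : ℕ → Submodule R M' := fun i => (N i).comap f with hA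
  set B : ℕ → Submodule R M'' := fun i => (N i).map g with hB
  obtain ⟨n', hn'⟩ := h' A (fun i => Submodule.comap_mono (hN i))
  obtain ⟨n'', hn''⟩ := h'' B (fun i => Submodule.map_mono (hN i))
  refine ⟨max n' n'', fun i hi p hp => ?_⟩
  -- restriction of f : A i → N i
  have hφ : ∀ x ∈ A i, f x ∈ N i := fun x hx => hx
  set φ : ↥(A i) →ₗ[R] ↥(N i) := f.restrict hφ with hφdef
  have hψ : ∀ x ∈ N i, g x ∈ B i := fun x hx => Submodule.mem_map_of_mem hx
  set ψ : ↥(N i) →ₗ[R] ↥(B i) := g.restrict hψ with hψdef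
  set α : (↥(A i) ⧸ (A (i + 1)).comap (A i).subtype) →ₗ[R]
      (↥(N i) ⧸ (N (i + 1)).comap (N i).subtype) :=
    Submodule.mapQ _ _ φ (show _ ≤ _ from fun x hx => hx) with hαdef
  set β : (↥(N i) ⧸ (N (i + 1)).comap (N i).subtype) →ₗ[R]
      (↥(B i) ⧸ (B (i + 1)).comap (B i).subtype) :=
    Submodule.mapQ _ _ ψ (show _ ≤ _ from fun x hx => Submodule.mem_map_of_mem hx) with hβdef
  have hαinj : Function.Injective α := by
    rw [injective_iff_map_eq_zero]
    intro a ha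
    induction a using Submodule.Quotient.induction_on with
    | H x =>
      rw [hαdef, Submodule.mapQ_apply, Submodule.Quotient.mk_eq_zero] at ha
      rw [Submodule.Quotient.mk_eq_zero]
      exact ha
  have hβsurj : Function.Surjective β := by
    intro b
    induction b using Submodule.Quotient.induction_on with
    | H y =>
      obtain ⟨x, hx, hxy⟩ := y.2
      refine ⟨Submodule.Quotient.mk ⟨x, hx⟩, ?_⟩
      rw [hβdef, Submodule.mapQ_apply]
      congr 1
      exact Subtype.ext hxy
  have hexact : Function.Exact α β := by
    intro b
    constructor
    · intro hb
      induction b using Submodule.Quotient.induction_on with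
      | H y =>
        rw [hβdef, Submodule.mapQ_apply, Submodule.Quotient.mk_eq_zero] at hb
        -- hb : g y.1 ∈ B (i+1)
        obtain ⟨z, hz, hzy⟩ := hb
        have hker : y.1 - z ∈ LinearMap.ker g := by
          rw [LinearMap.mem_ker, map_sub]
          exact sub_eq_zero_of_eq hzy.symm
        rw [← hfg] at hker
        obtain ⟨x, hx⟩ := hker
        have hxAi : x ∈ A i := by
          show f x ∈ N i
          rw [hx]
          exact sub_mem y.2 (hN i hz)
        refine ⟨Submodule.Quotient.mk ⟨x, hxAi⟩, ?_⟩
        rw [hαdef, Submodule.mapQ_apply]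
        rw [Submodule.Quotient.eq]
        show φ ⟨x, hxAi⟩ - y ∈ (N (i + 1)).comap (N i).subtype
        have : ((φ ⟨x, hxAi⟩ - y : ↥(N i)) : M) = -z := by
          show f x - y.1 = -z
          rw [hx]; abel
        show ((φ ⟨x, hxAi⟩ - y : ↥(N i)) : M) ∈ N (i + 1)
        rw [this]
        exact neg_mem hz
    · rintro ⟨a, rfl⟩
      induction a using Submodule.Quotient.induction_on with
      | H x =>
        rw [hαdef, hβdef, Submodule.mapQ_apply, Submodule.mapQ_apply,
          Submodule.Quotient.mk_eq_zero]
        show g (f x.1) ∈ B (i + 1)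
        have : f x.1 ∈ LinearMap.ker g := hfg ▸ LinearMap.mem_range_self f x.1
        rw [LinearMap.mem_ker.mp this]
        exact zero_mem _
  rw [Module.support_of_exact hexact hαinj hβsurj] at hp
  rcases hp with hp | hp
  · exact hn' i (le_trans (le_max_left _ _) hi) p hp
  · exact hn'' i (le_trans (le_max_right _ _) hi) p hp
end

section
/- Let R be a commutative noetherian ring and M an R-module belonging to the class Z. Then every submodule of M belongs to the class Z, and every quotient module of M belongs to the class Z. -/
universe u

lemma support_subset_aux {R : Type u} [CommRing R] {A B : Type u}
    [AddCommGroup A] [Module R A] [AddCommGroup B] [Module R B]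
    {PA : Submodule R A} {PB : Submodule R B} (f : A →ₗ[R] B)
    (hle : PA ≤ PB.comap f) (hsurj : Function.Surjective fun a => PB.mkQ (f a)) :
    Module.support R (B ⧸ PB) ⊆ Module.support R (A ⧸ PA) := by
  apply Module.support_subset_of_surjective (Submodule.mapQ PA PB f hle)
  intro y
  obtain ⟨y', rfl⟩ := hsurj.exists.mp ⟨y, rfl⟩
  exact ⟨PA.mkQ y', by simp [Submodule.mapQ_apply]⟩

/-- The class  is closed under submodules and quotients. -/
theorem inClassZ_submodule_and_quotient
    (R : Type u) [CommRing R] [IsNoetherianRing R]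
    (M : Type u) [AddCommGroup M] [Module R M] (h : InClassZ R M) :
    (∀ N : Submodule R M, InClassZ R ↥N) ∧ (∀ N : Submodule R M, InClassZ R (M ⧸ N)) := by
  constructor
  · intro K N hN
    set N' : ℕ → Submodule R M := fun i => (N i).map K.subtype with hN'
    obtain ⟨n, hn⟩ := h N' (fun i => Submodule.map_mono (hN i))
    refine ⟨n, fun i hi p hp => hn i hi p ?_⟩
    refine support_subset_aux
      (Submodule.equivMapOfInjective K.subtype K.injective_subtype (N i)).symm.toLinearMap
      ?_ ?_ hp
    · intro x hx
      set e := (Submodule.equivMapOfInjective K.subtype K.injective_subtype (N i)).symm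
      simp only [Submodule.mem_comap, Submodule.coe_subtype] at hx ⊢
      obtain ⟨y, hy, hyx⟩ := hx
      have h2 : K.subtype ((e x : ↥K)) = (x : M) :=
        Submodule.map_equivMapOfInjective_symm_apply K.subtype K.injective_subtype (N i) x
      have hye : y = (e x : ↥K) := K.injective_subtype (by simpa [hyx] using h2.symm)
      simpa [LinearEquiv.coe_coe, ← hye] using hy
    · set e := (Submodule.equivMapOfInjective K.subtype K.injective_subtype (N i)).symm
      intro y
      obtain ⟨z, rfl⟩ := Submodule.mkQ_surjective _ y
      exact ⟨e.symm z, by simp⟩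
  · intro K N hN
    set N' : ℕ → Submodule R (M) := fun i => (N i).comap K.mkQ with hN'
    obtain ⟨n, hn⟩ := h N' (fun i => Submodule.comap_mono (hN i))
    refine ⟨n, fun i hi p hp => hn i hi p ?_⟩
    refine support_subset_aux (K.mkQ.restrict (p := N' i) (q := N i) (fun x hx => hx)) ?_ ?_ hp
    · intro x hx
      simpa [hN', Submodule.mem_comap, LinearMap.restrict_apply] using hx
    · intro y
      obtain ⟨z, hz⟩ := Submodule.mkQ_surjective _ y
      obtain ⟨w, hw⟩ := K.mkQ_surjective (z : M ⧸ K)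
      have hw' : w ∈ N' i := by
        simp only [hN', Submodule.mem_comap, hw]
        exact z.2
      have hfw : (K.mkQ.restrict (p := N' i) (q := N i) (fun x hx => hx)) ⟨w, hw'⟩ = z :=
        Subtype.ext hw
      exact ⟨⟨w, hw'⟩, by dsimp only; rw [hfw, hz]⟩
end

section
/- Let R be a commutative noetherian ring, M an arbitrary R-module and N a finitely generated R-module. Then Att_R(M ⊗_R N) = Att_R(M) ∩ Supp_R(N); that is, for every prime ideal p of R: the annihilator of (M ⊗_R N)/p(M ⊗_R N) equals p if and only if the annihilator of M/pM equals p and p ∈ Supp_R(N). -/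
universe u

set_option maxHeartbeats 1000000


lemma AttAux.ideal_le_ann_quot {R : Type u} [CommRing R] (X : Type u) [AddCommGroup X]
    [Module R X] (p : Ideal R) :
    p ≤ Module.annihilator R (X ⧸ (p • (⊤ : Submodule R X))) := by
  intro a ha
  rw [Module.mem_annihilator]
  intro m
  obtain ⟨x, rfl⟩ := Submodule.Quotient.mk_surjective _ m
  rw [← Submodule.Quotient.mk_smul, Submodule.Quotient.mk_eq_zero]
  exact Submodule.smul_mem_smul ha trivial

lemma AttAux.smul_top_quot_eq_bot {R : Type u} [CommRing R] (X : Type u) [AddCommGroup X]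
    [Module R X] (p : Ideal R) :
    p • (⊤ : Submodule R (X ⧸ (p • (⊤ : Submodule R X)))) = ⊥ := by
  rw [eq_bot_iff]
  refine Submodule.smul_le.2 fun r hr x _ => ?_
  obtain ⟨m, rfl⟩ := Submodule.Quotient.mk_surjective _ x
  rw [Submodule.mem_bot, ← Submodule.Quotient.mk_smul, Submodule.Quotient.mk_eq_zero]
  exact Submodule.smul_mem_smul hr trivial

lemma AttAux.ann_quot_le {R : Type u} [CommRing R] (N : Type u) [AddCommGroup N] [Module R N]
    [Module.Finite R N] (p : Ideal R) [hp : p.IsPrime] (h : Module.annihilator R N ≤ p) :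
    Module.annihilator R (N ⧸ (p • (⊤ : Submodule R N))) ≤ p := by
  intro s hs
  have hrange : LinearMap.range (s • (LinearMap.id : N →ₗ[R] N)) ≤ p • (⊤ : Submodule R N) := by
    rintro _ ⟨n, rfl⟩
    have := Module.mem_annihilator.mp hs (Submodule.Quotient.mk n)
    rw [← Submodule.Quotient.mk_smul, Submodule.Quotient.mk_eq_zero] at this
    simpa using this
  obtain ⟨q, hq, -, hcoeff, heval⟩ :=
    LinearMap.exists_monic_and_coeff_mem_pow_and_aeval_eq_zero_of_range_le_smul R
      (s • (LinearMap.id : N →ₗ[R] N)) p hrange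
  have hsid : s • (LinearMap.id : N →ₗ[R] N) = algebraMap R (Module.End R N) s := rfl
  rw [hsid, Polynomial.aeval_algebraMap_apply] at heval
  rw [show ((Polynomial.aeval s) q : R) = Polynomial.eval s q from
    congrFun (Polynomial.coe_aeval_eq_eval s) q] at heval
  have hev : Polynomial.eval s q ∈ Module.annihilator R N := by
    rw [Module.mem_annihilator]
    intro n
    have : (algebraMap R (Module.End R N) (Polynomial.eval s q)) n = 0 := by
      rw [heval]; rfl
    simpa using this
  have hpow : s ^ q.natDegree ∈ p := by
    have hsum := Polynomial.eval_eq_sum_range (p := q) (x := s)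
    rw [Finset.sum_range_succ, hq.coeff_natDegree, one_mul] at hsum
    have hrest : ∑ i ∈ Finset.range q.natDegree, q.coeff i * s ^ i ∈ p := by
      refine Ideal.sum_mem _ fun i hi => Ideal.mul_mem_right _ _ ?_
      have : q.coeff i ∈ p ^ (q.natDegree - i) := hcoeff i
      refine Ideal.pow_le_self ?_ this
      simp only [Finset.mem_range] at hi
      omega
    have : s ^ q.natDegree = Polynomial.eval s q - ∑ i ∈ Finset.range q.natDegree, q.coeff i * s ^ i := by
      rw [hsum]; ring
    rw [this]
    exact Ideal.sub_mem _ (h hev) hrest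
  exact hp.mem_of_pow_mem _ hpow


lemma AttAux.exists_nonzero_hom {R : Type u} [CommRing R] (N : Type u) [AddCommGroup N]
    [Module R N] [Module.Finite R N] (p : Ideal R) [hp : p.IsPrime]
    (h : Module.annihilator R N ≤ p) :
    ∃ (φ : N →ₗ[R] R ⧸ p) (n : N), φ n ≠ 0 := by
  classical
  let A := R ⧸ p
  let Nb := N ⧸ (p • (⊤ : Submodule R N))
  haveI : IsScalarTower R A Nb := inferInstance
  haveI : Module.Finite A Nb := Module.Finite.of_restrictScalars_finite R A Nb
  have hann : Module.annihilator A Nb = ⊥ := by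
    rw [eq_bot_iff]
    intro a ha
    obtain ⟨x, rfl⟩ := Ideal.Quotient.mk_surjective a
    rw [Submodule.mem_bot, Ideal.Quotient.eq_zero_iff_mem]
    refine AttAux.ann_quot_le N p h ?_
    rw [Module.mem_annihilator]
    intro n
    have hx := Module.mem_annihilator.mp ha n
    rwa [← Ideal.Quotient.algebraMap_eq, algebraMap_smul] at hx
  obtain ⟨s, hs⟩ := Module.Finite.fg_top (R := A) (M := Nb)
  have hnt : ∃ n : Nb, ∀ c : A, c ≠ 0 → c • n ≠ 0 := by
    by_contra hcon
    push_neg at hcon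
    choose c hc0 hc using fun n => hcon n
    have hd0 : (∏ n ∈ s, c n) ≠ 0 := Finset.prod_ne_zero_iff.mpr fun n _ => hc0 n
    have hdann : (∏ n ∈ s, c n) ∈ Module.annihilator A Nb := by
      rw [Module.mem_annihilator]
      intro m
      have hm : m ∈ Submodule.span A (s : Set Nb) := hs ▸ Submodule.mem_top
      refine Submodule.span_induction ?_ ?_ ?_ ?_ hm
      · intro x hx
        obtain ⟨k, hk⟩ := Finset.dvd_prod_of_mem c hx
        rw [hk, mul_comm, mul_smul, hc x, smul_zero]
      · exact smul_zero _
      · intro x y _ _ hx hy; rw [smul_add, hx, hy, add_zero]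
      · intro a x _ hx; rw [smul_comm, hx, smul_zero]
    rw [hann, Submodule.mem_bot] at hdann
    exact hd0 hdann
  obtain ⟨n0, hn0⟩ := hnt
  let K := FractionRing A
  let ι := LocalizedModule.mkLinearMap (nonZeroDivisors A) Nb
  haveI : Module.Finite K (LocalizedModule (nonZeroDivisors A) Nb) :=
    Module.Finite.of_isLocalizedModule (nonZeroDivisors A) ι
  let v : LocalizedModule (nonZeroDivisors A) Nb := ι n0
  have hv : v ≠ 0 := by
    intro hv0
    obtain ⟨t, ht⟩ := (IsLocalizedModule.eq_zero_iff (nonZeroDivisors A) ι).mp hv0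
    exact hn0 t.1 (nonZeroDivisors.ne_zero t.2) ht
  have hdual : ∃ g : Module.Dual K (LocalizedModule (nonZeroDivisors A) Nb), g v ≠ 0 := by
    by_contra hcon
    push_neg at hcon
    exact hv ((Module.forall_dual_apply_eq_zero_iff K v).mp fun φ => hcon φ)
  obtain ⟨g, hg⟩ := hdual
  let ψ : Nb →ₗ[A] K := (g.restrictScalars A).comp ι
  obtain ⟨b, hb⟩ := IsLocalization.exist_integer_multiples (nonZeroDivisors A) s
    (fun n : Nb => ψ n)
  let ψ' : Nb →ₗ[A] K := b.1 • ψ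
  let W : Submodule A K := LinearMap.range (Algebra.linearMap A K)
  have hrange : ∀ x : Nb, ψ' x ∈ W := by
    intro x
    have hx : x ∈ Submodule.span A (s : Set Nb) := hs ▸ Submodule.mem_top
    refine Submodule.span_induction ?_ ?_ ?_ ?_ hx
    · intro y hy
      exact hb y hy
    · rw [map_zero]; exact W.zero_mem
    · intro x y _ _ hx hy; rw [map_add]; exact W.add_mem hx hy
    · intro a x _ hx; rw [map_smul]; exact W.smul_mem a hx
  haveI : NoZeroSMulDivisors A K :=
    ⟨fun {c x} h => by
      rw [Algebra.smul_def, mul_eq_zero] at h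
      exact h.imp_left fun h' => (IsFractionRing.injective A K) (by rw [h', map_zero])⟩
  let e : A ≃ₗ[A] W := LinearEquiv.ofInjective (Algebra.linearMap A K)
    (IsFractionRing.injective A K)
  let φA : Nb →ₗ[A] A := e.symm.toLinearMap.comp (ψ'.codRestrict W hrange)
  have hφA : φA n0 ≠ 0 := by
    intro h0
    have h1 : (ψ'.codRestrict W hrange) n0 = 0 :=
      (LinearEquiv.map_eq_zero_iff e.symm).mp h0
    have h2 : ψ' n0 = 0 := congrArg Subtype.val h1
    have h3 : ψ n0 ≠ 0 := hg
    exact (smul_ne_zero (nonZeroDivisors.ne_zero b.2) h3) h2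
  obtain ⟨n1, hn1⟩ := Submodule.Quotient.mk_surjective _ n0
  refine ⟨(φA.restrictScalars R).comp (p • (⊤ : Submodule R N)).mkQ, n1, ?_⟩
  have hmk : (p • (⊤ : Submodule R N)).mkQ n1 = n0 := hn1
  simpa [hmk] using hφA



/-- A prime `p` is attached to `M` if `Ann_R(M/pM) = p`. -/
def IsAttachedPrime (R : Type u) [CommRing R] (M : Type u) [AddCommGroup M] [Module R M]
    (p : Ideal R) : Prop :=
  Module.annihilator R (M ⧸ (p • (⊤ : Submodule R M))) = p

/-- A prime `p` is coassociated to `M` if `p = Ann_R(M/N)` for some submodule `N ⊆ M`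
with `M/N` artinian. -/
def IsCoassociatedPrime (R : Type u) [CommRing R] (M : Type u) [AddCommGroup M] [Module R M]
    (p : Ideal R) : Prop :=
  ∃ N : Submodule R M, IsArtinian R (M ⧸ N) ∧ Module.annihilator R (M ⧸ N) = p

open TensorProduct in
/-- For an arbitrary module `M` and a finitely generated module `N` over a noetherian ring,
`Att_R(M ⊗_R N) = Att_R(M) ∩ Supp_R(N)`. -/
theorem isAttachedPrime_tensor_iff
    (R : Type u) [CommRing R] [IsNoetherianRing R]
    (M N : Type u) [AddCommGroup M] [Module R M] [AddCommGroup N] [Module R N]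
    [Module.Finite R N] (p : PrimeSpectrum R) :
    IsAttachedPrime R (M ⊗[R] N) p.asIdeal ↔
      (IsAttachedPrime R M p.asIdeal ∧ p ∈ Module.support R N) := by
  haveI hp : p.asIdeal.IsPrime := p.2
  set q := p.asIdeal with hq
  constructor
  · intro h
    unfold IsAttachedPrime at h ⊢
    constructor
    · apply le_antisymm
      · intro a ha
        rw [← h]
        rw [Module.mem_annihilator] at ha ⊢
        intro z
        obtain ⟨z, rfl⟩ := Submodule.Quotient.mk_surjective _ z
        rw [← Submodule.Quotient.mk_smul, Submodule.Quotient.mk_eq_zero]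
        have key : ∀ m : M, a • m ∈ q • (⊤ : Submodule R M) := fun m => by
          have h2 := ha (Submodule.Quotient.mk m)
          rwa [← Submodule.Quotient.mk_smul, Submodule.Quotient.mk_eq_zero] at h2
        induction z using TensorProduct.induction_on with
        | zero => simpa using Submodule.zero_mem _
        | tmul m n =>
          have e1 : a • (m ⊗ₜ[R] n) = ((TensorProduct.mk R M N).flip n) (a • m) := by
            rw [TensorProduct.smul_tmul']; rfl
          rw [e1]
          have e2 : ((TensorProduct.mk R M N).flip n) (a • m) ∈
              Submodule.map ((TensorProduct.mk R M N).flip n) (q • ⊤) :=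
            Submodule.mem_map_of_mem (key m)
          rw [Submodule.map_smul''] at e2
          exact Submodule.smul_mono le_rfl le_top e2
        | add x y hx hy => rw [smul_add]; exact Submodule.add_mem _ hx hy
      · exact AttAux.ideal_le_ann_quot _ q
    · rw [Module.mem_support_iff_of_finite]
      intro a ha
      show a ∈ q
      rw [← h, Module.mem_annihilator]
      intro z
      obtain ⟨z, rfl⟩ := Submodule.Quotient.mk_surjective _ z
      rw [← Submodule.Quotient.mk_smul, Submodule.Quotient.mk_eq_zero]
      have e0 : a • z = 0 := by
        induction z using TensorProduct.induction_on with
        | zero => simp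
        | tmul m n =>
          rw [TensorProduct.smul_tmul', TensorProduct.smul_tmul,
            Module.mem_annihilator.mp ha n, TensorProduct.tmul_zero]
        | add x y hx hy => rw [smul_add, hx, hy, add_zero]
      rw [e0]
      exact Submodule.zero_mem _
  · rintro ⟨h1, h2⟩
    unfold IsAttachedPrime at h1 ⊢
    have hN : Module.annihilator R N ≤ q := Module.mem_support_iff_of_finite.mp h2
    apply le_antisymm
    · intro a ha
      obtain ⟨φ, n0, hφ⟩ := AttAux.exists_nonzero_hom N q hN
      haveI : IsScalarTower R (R ⧸ q) (M ⧸ q • (⊤ : Submodule R M)) := inferInstance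
      haveI hsc : SMulCommClass R (R ⧸ q) (M ⧸ q • (⊤ : Submodule R M)) := by
        constructor
        intro c b x
        obtain ⟨r, rfl⟩ := Ideal.Quotient.mk_surjective b
        obtain ⟨m, rfl⟩ := Submodule.Quotient.mk_surjective _ x
        rw [Module.Quotient.mk_smul_mk, ← Submodule.Quotient.mk_smul,
          ← Submodule.Quotient.mk_smul, Module.Quotient.mk_smul_mk, smul_comm]
      let bl : M →ₗ[R] N →ₗ[R] (M ⧸ q • (⊤ : Submodule R M)) :=
        LinearMap.mk₂ R
          (fun m n => φ n • (Submodule.Quotient.mk m : M ⧸ q • (⊤ : Submodule R M)))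
          (fun m1 m2 n => by rw [Submodule.Quotient.mk_add, smul_add])
          (fun c m n => by rw [Submodule.Quotient.mk_smul, smul_comm])
          (fun m n1 n2 => by rw [map_add, add_smul])
          (fun c m n => by rw [map_smul, smul_assoc])
      let θ : (M ⊗[R] N) →ₗ[R] (M ⧸ q • (⊤ : Submodule R M)) := TensorProduct.lift bl
      have ha' : ∀ m : M, a • (m ⊗ₜ[R] n0) ∈ q • (⊤ : Submodule R (M ⊗[R] N)) := fun m => by
        have h3 := Module.mem_annihilator.mp ha (Submodule.Quotient.mk (m ⊗ₜ[R] n0))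
        rwa [← Submodule.Quotient.mk_smul, Submodule.Quotient.mk_eq_zero] at h3
      have hθ : ∀ z ∈ q • (⊤ : Submodule R (M ⊗[R] N)), θ z = 0 := by
        intro z hz
        have h3 : θ z ∈ Submodule.map θ (q • ⊤) := Submodule.mem_map_of_mem hz
        rw [Submodule.map_smul''] at h3
        have h4 : θ z ∈ q • (⊤ : Submodule R (M ⧸ q • (⊤ : Submodule R M))) :=
          Submodule.smul_mono le_rfl le_top h3
        rw [AttAux.smul_top_quot_eq_bot M q] at h4
        simpa using h4
      obtain ⟨x, hx⟩ := Ideal.Quotient.mk_surjective (φ n0)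
      have hxq : x ∉ q := fun hxq =>
        hφ (by rw [← hx]; exact (Ideal.Quotient.eq_zero_iff_mem).mpr hxq)
      have hmain : ∀ m : M,
          ((a * x) : R) • (Submodule.Quotient.mk m : M ⧸ q • (⊤ : Submodule R M)) = 0 := by
        intro m
        have h0 := hθ _ (ha' m)
        have e1 : θ (a • (m ⊗ₜ[R] n0)) = a • (φ n0 • Submodule.Quotient.mk m) := by
          rw [map_smul]; rfl
        rw [e1] at h0
        have e2 : ((a * x) : R) • (Submodule.Quotient.mk m : M ⧸ q • (⊤ : Submodule R M)) =
            a • ((Ideal.Quotient.mk q x) • Submodule.Quotient.mk m) := by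
          rw [Module.Quotient.mk_smul_mk, ← Submodule.Quotient.mk_smul,
            ← Submodule.Quotient.mk_smul, mul_smul]
        rw [e2, hx]
        exact h0
      have hax : a * x ∈ Module.annihilator R (M ⧸ q • (⊤ : Submodule R M)) := by
        rw [Module.mem_annihilator]
        intro z
        obtain ⟨m, rfl⟩ := Submodule.Quotient.mk_surjective _ z
        exact hmain m
      rw [h1] at hax
      rcases hp.mem_or_mem hax with h' | h'
      · exact h'
      · exact absurd h' hxq
    · exact AttAux.ideal_le_ann_quot _ q
end

section
/- Let R be a commutative noetherian integral domain with field of fractions K, let M be an R-module with Ann_R(M) = 0, and let N be a finitely generated R-module with N ⊗_R K ≠ 0. Then Ann_R(M ⊗_R N) = 0. -/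
open TensorProduct

universe u

/-- Let `R` be a noetherian domain with fraction field `K`, `M` a faithful `R`-module and `N`
a finitely generated `R`-module with `N ⊗_R K ≠ 0`.  Then `M ⊗_R N` is faithful. -/
theorem annihilator_tensor_eq_bot
    (R : Type u) [CommRing R] [IsDomain R] [IsNoetherianRing R]
    (M N : Type u) [AddCommGroup M] [Module R M] [AddCommGroup N] [Module R N]
    [Module.Finite R N]
    (hM : Module.annihilator R M = ⊥)
    (hN : Nontrivial (N ⊗[R] (FractionRing R))) :
    Module.annihilator R (M ⊗[R] N) = ⊥ := by
  classical
  set K := FractionRing R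
  -- transfer nontriviality to K ⊗ N
  have hN' : Nontrivial (K ⊗[R] N) :=
    (TensorProduct.comm R N K).toEquiv.symm.nontrivial
  -- nonzero K-functional
  obtain ⟨v, hv⟩ := exists_ne (0 : K ⊗[R] N)
  obtain ⟨ψ, hψ⟩ : ∃ ψ : Module.Dual K (K ⊗[R] N), ψ v ≠ 0 := by
    by_contra h
    push_neg at h
    exact hv ((Module.forall_dual_apply_eq_zero_iff K v).mp h)
  -- g : N →ₗ[R] K, n ↦ ψ (1 ⊗ n)
  let g : N →ₗ[R] K := (ψ.restrictScalars R).comp ((TensorProduct.mk R K N) 1)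
  have hg : ∃ n : N, g n ≠ 0 := by
    by_contra h
    push_neg at h
    apply hψ
    have : ∀ x : K ⊗[R] N, ψ x = 0 := by
      intro x
      induction x using TensorProduct.induction_on with
      | zero => simp
      | tmul k n =>
        have : (k : K) ⊗ₜ[R] n = k • ((1 : K) ⊗ₜ[R] n) := by
          simp [TensorProduct.smul_tmul']
        rw [this, map_smul]
        have := h n
        simp only [g, LinearMap.comp_apply, LinearMap.restrictScalars_apply,
          TensorProduct.mk_apply] at this
        rw [this, smul_zero]
      | add x y hx hy => rw [map_add, hx, hy, add_zero]
    exact this v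
  obtain ⟨n₀, hn₀⟩ := hg
  -- common denominator
  obtain ⟨s, hs⟩ := Module.Finite.fg_top (R := R) (M := N)
  obtain ⟨d, hd⟩ := IsLocalization.exist_integer_multiples (nonZeroDivisors R) s g
  -- the linear map (d • g) lands in the image of R
  have hrange : ∀ n : N, ((d : R) • g) n ∈ LinearMap.range (Algebra.linearMap R K) := by
    have : Submodule.span R (↑s) ≤
        Submodule.comap ((d : R) • g) (LinearMap.range (Algebra.linearMap R K)) := by
      rw [Submodule.span_le]
      intro n hn
      obtain ⟨a, ha⟩ := hd n hn
      refine ⟨a, ?_⟩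
      simpa [Algebra.smul_def] using ha
    intro n
    exact this (hs ▸ Submodule.mem_top)
  have hinj : Function.Injective (Algebra.linearMap R K) :=
    IsFractionRing.injective R K
  -- φ : N →ₗ[R] R
  let e := LinearEquiv.ofInjective (Algebra.linearMap R K) hinj
  let φ : N →ₗ[R] R := (e.symm : _ →ₗ[R] R).comp
    (((d : R) • g).codRestrict (LinearMap.range (Algebra.linearMap R K)) hrange)
  have hφ : ∀ n : N, algebraMap R K (φ n) = (d : R) • g n := by
    intro n
    have : (Algebra.linearMap R K) (φ n) = ((d : R) • g) n :=
      congrArg Subtype.val (e.apply_symm_apply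
        (((d : R) • g).codRestrict (LinearMap.range (Algebra.linearMap R K)) hrange n))
    simpa using this
  have hφ0 : φ n₀ ≠ 0 := by
    intro h
    have := hφ n₀
    rw [h, map_zero] at this
    have hd0 : algebraMap R K (d : R) ≠ 0 :=
      IsFractionRing.to_map_ne_zero_of_mem_nonZeroDivisors d.2
    rw [Algebra.smul_def] at this
    exact (mul_ne_zero hd0 hn₀) this.symm
  -- the contraction map
  let Φ : M ⊗[R] N →ₗ[R] M := TensorProduct.lift (((LinearMap.lsmul R M).comp φ).flip)
  rw [eq_bot_iff]
  intro r hr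
  rw [Module.mem_annihilator] at hr
  simp only [Submodule.mem_bot]
  have key : ∀ m : M, (r * φ n₀) • m = 0 := by
    intro m
    have h1 : r • (m ⊗ₜ[R] n₀) = 0 := hr _
    have h2 := congrArg Φ h1
    rw [map_smul, map_zero] at h2
    simp only [Φ, TensorProduct.lift.tmul, LinearMap.flip_apply, LinearMap.comp_apply,
      LinearMap.lsmul_apply] at h2
    rw [smul_smul] at h2
    exact h2
  have : (r * φ n₀) ∈ Module.annihilator R M := Module.mem_annihilator.mpr key
  rw [hM, Submodule.mem_bot] at this
  rcases mul_eq_zero.mp this with h | h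
  · exact h
  · exact absurd h hφ0
end
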